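/- Fix an agent k and values z_j ∈ [0,1] for j ≠ k such that S(z_{−k}) = {j ≠ k : z_j = 1} is nonempty, and suppose σ_k² > σ_i² for every i ∈ S(z_{−k}). Then for every z_k ∈ [0,1), v_k(z_k, z_{−k}) < σ_k² = v_k(1, z_{−k}); consequently the best response set of agent k, B_k(z_{−k}) = argmin_{z_k ∈ [0,1]} v_k(z_k, z_{−k}), equals [0,1). -/
import Mathlib


open Matrix Filter Topology

open Finset

section general
variable {n : ℕ} (Q : Matrix (Fin n) (Fin n) ℝ)

lemma powNN (h1 : ∀ i j, 0 ≤ Q i j) : ∀ r i j, 0 ≤ (Q ^ r) i j := by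
  intro r
  induction r with
  | zero => intro i j; simp [Matrix.one_apply]; positivity
  | succ r ih =>
    intro i j
    rw [pow_succ, Matrix.mul_apply]
    exact Finset.sum_nonneg fun l _ => mul_nonneg (ih i l) (h1 l j)

lemma powRow (h2 : ∀ i, ∑ j, Q i j = 1) : ∀ r i, ∑ j, (Q ^ r) i j = 1 := by
  intro r
  induction r with
  | zero => intro i; simp [Matrix.one_apply]
  | succ r ih =>
    intro i
    simp only [pow_succ, Matrix.mul_apply]
    rw [Finset.sum_comm]
    have h : ∀ l, ∑ j, (Q ^ r) i l * Q l j = (Q ^ r) i l := fun l => by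
      rw [← Finset.mul_sum, h2 l, mul_one]
    rw [Finset.sum_congr rfl fun l _ => h l]
    exact ih i

lemma powStub (St : Fin n → Prop)
    (h3 : ∀ i, St i → ∀ j, Q i j = if i = j then 1 else 0) :
    ∀ r i, St i → ∀ j, (Q ^ r) i j = if i = j then 1 else 0 := by
  intro r
  induction r with
  | zero => intro i _ j; simp [Matrix.one_apply]
  | succ r ih =>
    intro i hi j
    rw [pow_succ', Matrix.mul_apply]
    have : ∀ l, Q i l * (Q ^ r) l j = (if i = l then (Q ^ r) l j else 0) := by
      intro l; rw [h3 i hi l]; split <;> simp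
    simp_rw [this]
    rw [Finset.sum_ite_eq]
    simp [ih i hi j]

lemma decayLem (St : Fin n → Prop) [DecidablePred St]
    (h1 : ∀ i j, 0 ≤ Q i j) (h2 : ∀ i, ∑ j, Q i j = 1)
    (h3 : ∀ i, St i → ∀ j, Q i j = if i = j then 1 else 0)
    (hn : 0 < n) (m : ℕ)
    (hm : ∀ i, ∃ j, St j ∧ 0 < (Q ^ m) i j) :
    ∃ c : ℝ, 0 ≤ c ∧ c < 1 ∧
      ∀ r i, ∑ j ∈ Finset.univ.filter (fun j => ¬ St j), (Q ^ (m * r)) i j ≤ c ^ r := by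
  classical
  set g : Fin n → ℝ := fun i => ∑ j ∈ Finset.univ.filter (fun j => ¬ St j), (Q ^ m) i j with hg
  have hne : (Finset.univ : Finset (Fin n)).Nonempty := by
    have : Nonempty (Fin n) := Fin.pos_iff_nonempty.mp hn
    exact Finset.univ_nonempty
  obtain ⟨b, -, hb⟩ := Finset.exists_max_image Finset.univ g hne
  refine ⟨g b, ?_, ?_, ?_⟩
  · exact Finset.sum_nonneg fun j _ => powNN Q h1 m b j
  · -- g b < 1
    obtain ⟨j0, hj0S, hj0pos⟩ := hm b
    have hsub : Finset.univ.filter (fun j => ¬ St j) ⊆ Finset.univ.erase j0 := by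
      intro x hx
      simp only [Finset.mem_filter] at hx
      exact Finset.mem_erase.mpr ⟨fun h => hx.2 (h ▸ hj0S), Finset.mem_univ x⟩
    have h1' : g b ≤ ∑ j ∈ Finset.univ.erase j0, (Q ^ m) b j :=
      Finset.sum_le_sum_of_subset_of_nonneg hsub (fun j _ _ => powNN Q h1 m b j)
    have h2' : ∑ j ∈ Finset.univ.erase j0, (Q ^ m) b j + (Q ^ m) b j0 = 1 := by
      rw [Finset.sum_erase_add _ _ (Finset.mem_univ j0)]
      exact powRow Q h2 m b
    linarith
  · intro r
    induction r with
    | zero =>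
      intro i
      simp only [Nat.mul_zero, pow_zero, Matrix.one_apply]
      calc (∑ x ∈ Finset.univ.filter (fun j => ¬ St j), if i = x then (1:ℝ) else 0)
          ≤ ∑ x : Fin n, (if i = x then (1:ℝ) else 0) := by
            apply Finset.sum_le_sum_of_subset_of_nonneg (Finset.filter_subset _ _)
            intro j _ _; split <;> norm_num
        _ = 1 := by rw [Finset.sum_ite_eq Finset.univ i (fun _ => (1:ℝ))]; simp
    | succ r ih =>
      intro i
      have hpow : Q ^ (m * (r + 1)) = Q ^ m * Q ^ (m * r) := by
        rw [← pow_add]; ring_nf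
      rw [hpow]
      have step : ∀ j, (Q ^ m * Q ^ (m * r)) i j = ∑ l, (Q ^ m) i l * (Q ^ (m * r)) l j :=
        fun j => Matrix.mul_apply
      rw [Finset.sum_congr rfl fun j _ => step j, Finset.sum_comm]
      have inner : ∀ l, ∑ j ∈ Finset.univ.filter (fun j => ¬ St j),
          (Q ^ m) i l * (Q ^ (m * r)) l j
          = (Q ^ m) i l * ∑ j ∈ Finset.univ.filter (fun j => ¬ St j), (Q ^ (m * r)) l j :=
        fun l => (Finset.mul_sum _ _ _).symm
      rw [Finset.sum_congr rfl fun l _ => inner l]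
      have hsplit : ∀ l : Fin n,
          (Q ^ m) i l * ∑ j ∈ Finset.univ.filter (fun j => ¬ St j), (Q ^ (m * r)) l j
          ≤ (if St l then 0 else (Q ^ m) i l * g b ^ r) := by
        intro l
        by_cases hl : St l
        · simp only [hl, if_true]
          have : ∀ j ∈ Finset.univ.filter (fun j => ¬ St j), (Q ^ (m*r)) l j = 0 := by
            intro j hj
            simp only [Finset.mem_filter] at hj
            rw [powStub Q St h3 (m*r) l hl j]
            split
            · next h => exact absurd (h ▸ hl) hj.2
            · rfl
          rw [Finset.sum_congr rfl this]
          simp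
        · simp only [hl, if_false]
          exact mul_le_mul_of_nonneg_left (ih l) (powNN Q h1 m i l)
      calc ∑ l, (Q ^ m) i l * ∑ j ∈ Finset.univ.filter (fun j => ¬ St j), (Q ^ (m * r)) l j
          ≤ ∑ l, (if St l then 0 else (Q ^ m) i l * g b ^ r) :=
            Finset.sum_le_sum fun l _ => hsplit l
        _ = ∑ l ∈ Finset.univ.filter (fun l => ¬ St l), (Q ^ m) i l * g b ^ r := by
            rw [← Finset.sum_filter_add_sum_filter_not Finset.univ (fun l => ¬ St l)]
            simp only [not_not]
            have e1 : ∑ l ∈ Finset.univ.filter (fun l => ¬ St l),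
                (if St l then 0 else (Q ^ m) i l * g b ^ r)
                = ∑ l ∈ Finset.univ.filter (fun l => ¬ St l), (Q ^ m) i l * g b ^ r := by
              apply Finset.sum_congr rfl
              intro l hl
              simp only [Finset.mem_filter] at hl
              rw [if_neg hl.2]
            have e2 : ∑ l ∈ Finset.univ.filter (fun l => St l),
                (if St l then (0:ℝ) else (Q ^ m) i l * g b ^ r) = 0 := by
              apply Finset.sum_eq_zero
              intro l hl
              simp only [Finset.mem_filter] at hl
              rw [if_pos hl.2]
            rw [e1, e2, add_zero]
        _ = g i * g b ^ r := by rw [← Finset.sum_mul]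
        _ ≤ g b * g b ^ r := by
            have : 0 ≤ g b ^ r := by
              apply pow_nonneg
              exact Finset.sum_nonneg fun j _ => powNN Q h1 m b j
            exact mul_le_mul_of_nonneg_right (hb i (Finset.mem_univ i)) this
        _ = g b ^ (r + 1) := by ring

lemma limitZero (St : Fin n → Prop) [DecidablePred St]
    (h1 : ∀ i j, 0 ≤ Q i j) (m : ℕ) (hm1 : 1 ≤ m) (c : ℝ) (hc0 : 0 ≤ c) (hc1 : c < 1)
    (hdec : ∀ r i, ∑ j ∈ Finset.univ.filter (fun j => ¬ St j), (Q ^ (m * r)) i j ≤ c ^ r)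
    (A : Matrix (Fin n) (Fin n) ℝ)
    (hA : ∀ i j, Tendsto (fun t : ℕ => (Q ^ t) i j) atTop (𝓝 (A i j)))
    (i j : Fin n) (hj : ¬ St j) : A i j = 0 := by
  have hmono : StrictMono (fun r : ℕ => m * r) := fun a b h => by
    simp only
    have : m * a + 1 * 1 ≤ m * b := by
      calc m * a + 1 * 1 ≤ m * a + m * (b - a) :=
            add_le_add le_rfl (Nat.mul_le_mul hm1 (by omega))
        _ = m * b := by rw [← Nat.mul_add]; congr 1; omega
    omega
  have hsub : Tendsto (fun r : ℕ => (Q ^ (m * r)) i j) atTop (𝓝 (A i j)) :=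
    (hA i j).comp hmono.tendsto_atTop
  have hub : ∀ r : ℕ, (Q ^ (m * r)) i j ≤ c ^ r := by
    intro r
    refine le_trans ?_ (hdec r i)
    apply Finset.single_le_sum (f := fun j => (Q ^ (m * r)) i j)
      (fun l _ => powNN Q h1 (m * r) i l)
    simp [hj]
  have hzero : Tendsto (fun r : ℕ => (Q ^ (m * r)) i j) atTop (𝓝 0) := by
    apply squeeze_zero (fun r => powNN Q h1 (m * r) i j) hub
    exact tendsto_pow_atTop_nhds_zero_of_lt_one hc0 hc1
  exact tendsto_nhds_unique hsub hzero

lemma harmonicZero (St : Fin n → Prop) [DecidablePred St]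
    (h1 : ∀ i j, 0 ≤ Q i j) (hn : 0 < n)
    (m : ℕ) (hm1 : 1 ≤ m) (c : ℝ) (hc0 : 0 ≤ c) (hc1 : c < 1)
    (hdec : ∀ r i, ∑ j ∈ Finset.univ.filter (fun j => ¬ St j), (Q ^ (m * r)) i j ≤ c ^ r)
    (d : Fin n → ℝ) (hd0 : ∀ j, St j → d j = 0)
    (hdh : ∀ i, d i = ∑ l, Q i l * d l) : ∀ i, d i = 0 := by
  have key : ∀ r i, d i = ∑ l, (Q ^ r) i l * d l := by
    intro r
    induction r with
    | zero =>
      intro i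
      simp only [pow_zero, Matrix.one_apply]
      rw [Finset.sum_congr rfl (fun l (_ : l ∈ Finset.univ) => by
        rw [ite_mul, one_mul, zero_mul])]
      rw [Finset.sum_ite_eq Finset.univ i d]
      simp
    | succ r ih =>
      intro i
      calc d i = ∑ l, Q i l * d l := hdh i
        _ = ∑ l, Q i l * (∑ l', (Q ^ r) l l' * d l') := by
            exact Finset.sum_congr rfl fun l _ => by rw [← ih l]
        _ = ∑ l', (∑ l, Q i l * (Q ^ r) l l') * d l' := by
            simp_rw [Finset.mul_sum, Finset.sum_mul]
            rw [Finset.sum_comm]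
            exact Finset.sum_congr rfl fun l' _ => Finset.sum_congr rfl fun l _ => by ring
        _ = ∑ l', (Q ^ (r+1)) i l' * d l' := by
            exact Finset.sum_congr rfl fun l' _ => by rw [pow_succ', Matrix.mul_apply]
  have hne : (Finset.univ : Finset (Fin n)).Nonempty := by
    have : Nonempty (Fin n) := Fin.pos_iff_nonempty.mp hn
    exact Finset.univ_nonempty
  obtain ⟨b, -, hb⟩ := Finset.exists_max_image Finset.univ (fun l => |d l|) hne
  intro i
  have bound : ∀ r : ℕ, |d i| ≤ c ^ r * |d b| := by
    intro r
    have e1 : d i = ∑ l ∈ Finset.univ.filter (fun l => ¬ St l), (Q ^ (m * r)) i l * d l := by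
      rw [key (m * r) i,
        ← Finset.sum_filter_add_sum_filter_not Finset.univ (fun l => ¬ St l)]
      have e2 : ∑ l ∈ Finset.univ.filter (fun l => ¬ ¬ St l), (Q ^ (m*r)) i l * d l = 0 := by
        apply Finset.sum_eq_zero
        intro l hl
        simp only [Finset.mem_filter, not_not] at hl
        rw [hd0 l hl.2, mul_zero]
      rw [e2, add_zero]
    calc |d i| = |∑ l ∈ Finset.univ.filter (fun l => ¬ St l), (Q ^ (m * r)) i l * d l| := by
          rw [← e1]
      _ ≤ ∑ l ∈ Finset.univ.filter (fun l => ¬ St l), |(Q ^ (m * r)) i l * d l| :=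
          Finset.abs_sum_le_sum_abs _ _
      _ ≤ ∑ l ∈ Finset.univ.filter (fun l => ¬ St l), (Q ^ (m * r)) i l * |d b| := by
          apply Finset.sum_le_sum
          intro l _
          rw [abs_mul, abs_of_nonneg (powNN Q h1 (m*r) i l)]
          exact mul_le_mul_of_nonneg_left (hb l (Finset.mem_univ l))
            (powNN Q h1 (m*r) i l)
      _ = (∑ l ∈ Finset.univ.filter (fun l => ¬ St l), (Q ^ (m * r)) i l) * |d b| := by
          rw [Finset.sum_mul]
      _ ≤ c ^ r * |d b| :=
          mul_le_mul_of_nonneg_right (hdec r i) (abs_nonneg _)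
  have hlim : Tendsto (fun r : ℕ => c ^ r * |d b|) atTop (𝓝 0) := by
    have := (tendsto_pow_atTop_nhds_zero_of_lt_one hc0 hc1).mul_const (|d b|)
    simpa using this
  have : |d i| ≤ 0 := ge_of_tendsto' hlim bound
  have := abs_nonneg (d i)
  have : |d i| = 0 := le_antisymm ‹|d i| ≤ 0› ‹0 ≤ |d i|›
  exact abs_eq_zero.mp this

end general

section spec
variable {n : ℕ} (P : Matrix (Fin n) (Fin n) ℝ)

/-- The matrix Q(w). -/
def Qm (w : Fin n → ℝ) : Matrix (Fin n) (Fin n) ℝ :=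
  (1 - Matrix.diagonal w) * P + Matrix.diagonal w

lemma Qm_apply (w : Fin n → ℝ) (i j : Fin n) :
    Qm P w i j = (1 - w i) * P i j + (if i = j then w i else 0) := by
  unfold Qm
  rw [Matrix.add_apply, Matrix.sub_mul, Matrix.one_mul, Matrix.sub_apply,
    Matrix.diagonal_mul, Matrix.diagonal_apply]
  split
  · next h => subst h; ring_nf
  · next h => ring_nf

lemma Qm_nonneg (hPnn : ∀ i j, 0 ≤ P i j) (w : Fin n → ℝ)
    (hw : ∀ i, w i ∈ Set.Icc (0:ℝ) 1) (i j : Fin n) : 0 ≤ Qm P w i j := by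
  rw [Qm_apply]
  have h1 := (hw i).1
  have h2 := (hw i).2
  have := hPnn i j
  split <;> nlinarith

lemma Qm_row (hProw : ∀ i, ∑ j, P i j = 1) (w : Fin n → ℝ) (i : Fin n) :
    ∑ j, Qm P w i j = 1 := by
  simp_rw [Qm_apply]
  rw [Finset.sum_add_distrib, ← Finset.mul_sum, hProw i,
    Finset.sum_ite_eq Finset.univ i (fun _ => w i)]
  simp

lemma Qm_stub (w : Fin n → ℝ) (i : Fin n) (hi : w i = 1) (j : Fin n) :
    Qm P w i j = if i = j then 1 else 0 := by
  rw [Qm_apply, hi]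
  split <;> ring

lemma Qm_path (hPnn : ∀ i j, 0 ≤ P i j) (hPdiag : ∀ i, P i i = 0)
    (w : Fin n → ℝ) (hw : ∀ i, w i ∈ Set.Icc (0:ℝ) 1)
    (s : Fin n) (hs : w s = 1) :
    ∀ r i, 0 < (P ^ r) i s → ∃ j, w j = 1 ∧ 0 < ((Qm P w) ^ r) i j := by
  intro r
  induction r with
  | zero =>
    intro i hi
    simp only [pow_zero, Matrix.one_apply] at hi ⊢
    by_cases h : i = s
    · subst h
      exact ⟨i, hs, by simp⟩
    · rw [if_neg h] at hi; linarith
  | succ r ih =>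
    intro i hi
    by_cases hwi : w i = 1
    · refine ⟨i, hwi, ?_⟩
      rw [powStub (Qm P w) (fun l => w l = 1) (fun l hl => Qm_stub P w l hl) (r+1) i hwi i]
      simp
    · have hwi' : w i < 1 := lt_of_le_of_ne (hw i).2 hwi
      rw [pow_succ', Matrix.mul_apply] at hi
      have hex : ∃ l, 0 < P i l * (P ^ r) l s := by
        by_contra hcon
        push_neg at hcon
        have : ∑ l, P i l * (P ^ r) l s ≤ 0 := Finset.sum_nonpos fun l _ => hcon l
        linarith
      obtain ⟨l, hl⟩ := hex
      have hPil : 0 < P i l := by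
        rcases lt_or_ge 0 (P i l) with h | h
        · exact h
        · exfalso
          have h0 : P i l = 0 := le_antisymm h (hPnn i l)
          rw [h0, zero_mul] at hl; linarith
      have hPrs : 0 < (P ^ r) l s := by
        by_contra hcon
        push_neg at hcon
        nlinarith
      obtain ⟨j, hjS, hjpos⟩ := ih l hPrs
      refine ⟨j, hjS, ?_⟩
      rw [pow_succ', Matrix.mul_apply]
      have hil : i ≠ l := by
        intro h
        rw [← h, hPdiag i] at hPil
        exact lt_irrefl 0 hPil
      have hQil : 0 < Qm P w i l := by
        rw [Qm_apply, if_neg hil, add_zero]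
        nlinarith
      have hterm : 0 < Qm P w i l * ((Qm P w) ^ r) l j := mul_pos hQil hjpos
      have hnn : ∀ l' ∈ Finset.univ, l' ≠ l →
          0 ≤ Qm P w i l' * ((Qm P w) ^ r) l' j := fun l' _ _ =>
        mul_nonneg (Qm_nonneg P hPnn w hw i l') (powNN _ (Qm_nonneg P hPnn w hw) r l' j)
      calc (0:ℝ) < Qm P w i l * ((Qm P w) ^ r) l j := hterm
        _ ≤ ∑ l', Qm P w i l' * ((Qm P w) ^ r) l' j :=
            Finset.single_le_sum (f := fun l' => Qm P w i l' * ((Qm P w) ^ r) l' j)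
              (fun l' _ => mul_nonneg (Qm_nonneg P hPnn w hw i l')
                (powNN _ (Qm_nonneg P hPnn w hw) r l' j)) (Finset.mem_univ l)

lemma H_nonneg (hPnn : ∀ i j, 0 ≤ P i j) (w : Fin n → ℝ) (hw : ∀ i, w i ∈ Set.Icc (0:ℝ) 1)
    (A : Matrix (Fin n) (Fin n) ℝ)
    (hA : ∀ i j, Tendsto (fun t : ℕ => ((Qm P w) ^ t) i j) atTop (𝓝 (A i j)))
    (i j : Fin n) : 0 ≤ A i j :=
  ge_of_tendsto' (hA i j) (fun t => powNN _ (Qm_nonneg P hPnn w hw) t i j)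

lemma H_rowsum (hProw : ∀ i, ∑ j, P i j = 1) (w : Fin n → ℝ)
    (A : Matrix (Fin n) (Fin n) ℝ)
    (hA : ∀ i j, Tendsto (fun t : ℕ => ((Qm P w) ^ t) i j) atTop (𝓝 (A i j)))
    (i : Fin n) : ∑ j, A i j = 1 := by
  have h1 : Tendsto (fun t : ℕ => ∑ j, ((Qm P w) ^ t) i j) atTop (𝓝 (∑ j, A i j)) :=
    tendsto_finset_sum _ (fun j _ => hA i j)
  have h2 : (fun t : ℕ => ∑ j, ((Qm P w) ^ t) i j) = fun _ => (1:ℝ) :=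
    funext fun t => powRow _ (Qm_row P hProw w) t i
  rw [h2] at h1
  exact tendsto_nhds_unique h1 tendsto_const_nhds

lemma H_stubrow (w : Fin n → ℝ)
    (A : Matrix (Fin n) (Fin n) ℝ)
    (hA : ∀ i j, Tendsto (fun t : ℕ => ((Qm P w) ^ t) i j) atTop (𝓝 (A i j)))
    (i : Fin n) (hi : w i = 1) (j : Fin n) : A i j = if i = j then 1 else 0 := by
  have h2 : (fun t : ℕ => ((Qm P w) ^ t) i j) = fun _ => (if i = j then (1:ℝ) else 0) :=
    funext fun t =>
      powStub (Qm P w) (fun l => w l = 1) (fun l hl => Qm_stub P w l hl) t i hi j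
  have h1 := hA i j
  rw [h2] at h1
  exact tendsto_nhds_unique h1 tendsto_const_nhds

lemma H_fixed (w : Fin n → ℝ)
    (A : Matrix (Fin n) (Fin n) ℝ)
    (hA : ∀ i j, Tendsto (fun t : ℕ => ((Qm P w) ^ t) i j) atTop (𝓝 (A i j)))
    (i j : Fin n) : A i j = ∑ l, Qm P w i l * A l j := by
  have h1 : Tendsto (fun t : ℕ => ((Qm P w) ^ (t + 1)) i j) atTop (𝓝 (A i j)) :=
    (hA i j).comp (tendsto_add_atTop_nat 1)
  have h2 : (fun t : ℕ => ((Qm P w) ^ (t + 1)) i j)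
      = fun t : ℕ => ∑ l, Qm P w i l * ((Qm P w) ^ t) l j :=
    funext fun t => by rw [pow_succ', Matrix.mul_apply]
  rw [h2] at h1
  have h3 : Tendsto (fun t : ℕ => ∑ l, Qm P w i l * ((Qm P w) ^ t) l j) atTop
      (𝓝 (∑ l, Qm P w i l * A l j)) :=
    tendsto_finset_sum _ (fun l _ => (hA l j).const_mul _)
  exact tendsto_nhds_unique h1 h3

end spec

/-- Fix an agent `k` and values `z_j ∈ [0,1]` for `j ≠ k` such that
`S(z_{-k})` is nonempty and `σ_k² > σ_i²` for every `i ∈ S(z_{-k})`. Then for every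
`z_k ∈ [0,1)`, `v_k(z_k, z_{-k}) < σ_k² = v_k(1, z_{-k})`; consequently the best
response set `B_k(z_{-k}) = argmin_{z_k ∈ [0,1]} v_k(z_k, z_{-k})` equals `[0,1)`. -/
theorem stmt_6 (n : ℕ) (hn : 2 ≤ n)
    (P : Matrix (Fin n) (Fin n) ℝ)
    (hPnn : ∀ i j, 0 ≤ P i j)
    (hProw : ∀ i, ∑ j, P i j = 1)
    (hPdiag : ∀ i, P i i = 0)
    (hPprim : ∃ m : ℕ, ∀ i j, 0 < (P ^ m) i j)
    (σ2 : Fin n → ℝ) (hσ : ∀ i, 0 < σ2 i)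
    (H : (Fin n → ℝ) → Matrix (Fin n) (Fin n) ℝ)
    (hH : ∀ z : Fin n → ℝ, (∀ i, z i ∈ Set.Icc (0 : ℝ) 1) →
      ∀ i j, Tendsto
        (fun t : ℕ => (((1 - Matrix.diagonal z) * P + Matrix.diagonal z) ^ t) i j)
        atTop (𝓝 (H z i j)))
    (k : Fin n) (z : Fin n → ℝ)
    (hz : ∀ j, j ≠ k → z j ∈ Set.Icc (0 : ℝ) 1)
    (hS : ∃ j, j ≠ k ∧ z j = 1)
    (hσk : ∀ i, i ≠ k → z i = 1 → σ2 i < σ2 k) :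
    (∀ t ∈ Set.Ico (0 : ℝ) 1,
      ∑ j, (H (Function.update z k t) k j) ^ 2 * σ2 j < σ2 k) ∧
    (∑ j, (H (Function.update z k 1) k j) ^ 2 * σ2 j = σ2 k) ∧
    ({t ∈ Set.Icc (0 : ℝ) 1 | ∀ s ∈ Set.Icc (0 : ℝ) 1,
        ∑ j, (H (Function.update z k t) k j) ^ 2 * σ2 j ≤
        ∑ j, (H (Function.update z k s) k j) ^ 2 * σ2 j}
      = Set.Ico (0 : ℝ) 1) := by
  classical
  obtain ⟨s, hsk, hs1⟩ := hS
  obtain ⟨m, hmp⟩ := hPprim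
  have hn0 : 0 < n := by omega
  -- m ≥ 1
  have hm1 : 1 ≤ m := by
    by_contra hcon
    push_neg at hcon
    interval_cases m
    have := hmp ⟨0, by omega⟩ ⟨1, by omega⟩
    simp [Matrix.one_apply, Fin.ext_iff] at this
  -- bounds on updated vectors
  have hwmem : ∀ t : ℝ, 0 ≤ t → t ≤ 1 → ∀ i, Function.update z k t i ∈ Set.Icc (0:ℝ) 1 := by
    intro t ht0 ht1 i
    by_cases hik : i = k
    · subst hik; rw [Function.update_self]; exact ⟨ht0, ht1⟩
    · rw [Function.update_of_ne hik]; exact hz i hik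
  have hwk : ∀ t : ℝ, Function.update z k t k = t := fun t => Function.update_self k t z
  have hwnk : ∀ (t : ℝ) i, i ≠ k → Function.update z k t i = z i :=
    fun t i h => Function.update_of_ne h t z
  -- PART 2
  have part2 : ∑ j, (H (Function.update z k 1) k j) ^ 2 * σ2 j = σ2 k := by
    set w := Function.update z k (1:ℝ) with hwdef
    have hw : ∀ i, w i ∈ Set.Icc (0:ℝ) 1 := hwmem 1 zero_le_one le_rfl
    have hA : ∀ i j, Tendsto (fun u : ℕ => ((Qm P w) ^ u) i j) atTop (𝓝 (H w i j)) :=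
      hH w hw
    have hst : ∀ j, H w k j = if k = j then 1 else 0 :=
      H_stubrow P w (H w) hA k (hwk 1)
    rw [Finset.sum_congr rfl fun j _ => by rw [hst j]]
    rw [Finset.sum_congr rfl fun j (_ : j ∈ Finset.univ) => by
      rw [ite_pow, one_pow, zero_pow (two_ne_zero), ite_mul, one_mul, zero_mul]]
    rw [Finset.sum_ite_eq Finset.univ k σ2]
    simp
  -- PART 1 : strict inequality for t < 1
  have part1 : ∀ t : ℝ, 0 ≤ t → t < 1 →
      ∑ j, (H (Function.update z k t) k j) ^ 2 * σ2 j < σ2 k := by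
    intro t ht0 ht1
    set w := Function.update z k t with hwdef
    have hw : ∀ i, w i ∈ Set.Icc (0:ℝ) 1 := hwmem t ht0 (le_of_lt ht1)
    set A := H w with hAdef
    set Q := Qm P w with hQdef
    have hA : ∀ i j, Tendsto (fun u : ℕ => (Q ^ u) i j) atTop (𝓝 (A i j)) := hH w hw
    have hnnQ : ∀ i j, 0 ≤ Q i j := Qm_nonneg P hPnn w hw
    have hrowQ : ∀ i, ∑ j, Q i j = 1 := Qm_row P hProw w
    have hstubQ : ∀ i, w i = 1 → ∀ j, Q i j = if i = j then 1 else 0 :=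
      fun i hi j => Qm_stub P w i hi j
    have hws : w s = 1 := by rw [hwdef, hwnk t s hsk]; exact hs1
    have hmpath : ∀ i, ∃ j, w j = 1 ∧ 0 < (Q ^ m) i j :=
      fun i => Qm_path P hPnn hPdiag w hw s hws m i (hmp i s)
    obtain ⟨c, hc0, hc1, hdec⟩ :=
      decayLem Q (fun j => w j = 1) hnnQ hrowQ hstubQ hn0 m hmpath
    have hzero : ∀ j, ¬ (w j = 1) → A k j = 0 :=
      fun j hj => limitZero Q (fun j => w j = 1) hnnQ m hm1 c hc0 hc1 hdec A hA k j hj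
    have hAnn : ∀ j, 0 ≤ A k j := fun j => H_nonneg P hPnn w hw A hA k j
    have hrowA : ∑ j, A k j = 1 := H_rowsum P hProw w A hA k
    set F := Finset.univ.filter (fun j => w j = 1) with hFdef
    have hsumF : ∑ j ∈ F, A k j = 1 := by
      rw [← Finset.sum_filter_add_sum_filter_not Finset.univ (fun j => w j = 1)
        (fun j => A k j)] at hrowA
      have : ∑ j ∈ Finset.univ.filter (fun j => ¬ w j = 1), A k j = 0 :=
        Finset.sum_eq_zero fun j hj => hzero j (Finset.mem_filter.mp hj).2
      rw [this, add_zero] at hrowA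
      exact hrowA
    have hAle1 : ∀ j ∈ F, A k j ≤ 1 := by
      intro j hj
      rw [← hsumF]
      exact Finset.single_le_sum (fun l _ => hAnn l) hj
    have hFk : ∀ j ∈ F, j ≠ k := by
      intro j hj hjk
      have h5 := (Finset.mem_filter.mp hj).2
      rw [hjk, hwdef, hwk t] at h5
      linarith
    have hFσ : ∀ j ∈ F, σ2 j < σ2 k := by
      intro j hj
      have hj1 := (Finset.mem_filter.mp hj).2
      have hjk := hFk j hj
      rw [hwdef, hwnk t j hjk] at hj1
      exact hσk j hjk hj1
    obtain ⟨j0, hj0F, hj0pos⟩ : ∃ j0 ∈ F, 0 < A k j0 := by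
      by_contra hcon
      push_neg at hcon
      have : ∑ j ∈ F, A k j ≤ 0 := Finset.sum_nonpos fun j hj => hcon j hj
      linarith
    have hFne : F.Nonempty := ⟨j0, hj0F⟩
    have e1 : ∑ j, (A k j) ^ 2 * σ2 j = ∑ j ∈ F, (A k j) ^ 2 * σ2 j := by
      rw [← Finset.sum_filter_add_sum_filter_not Finset.univ (fun j => w j = 1)
        (fun j => (A k j) ^ 2 * σ2 j)]
      have : ∑ j ∈ Finset.univ.filter (fun j => ¬ w j = 1), (A k j) ^ 2 * σ2 j = 0 :=
        Finset.sum_eq_zero fun j hj => by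
          rw [hzero j (Finset.mem_filter.mp hj).2]; ring
      rw [this, add_zero]
    have e2 : ∑ j ∈ F, (A k j) ^ 2 * σ2 j < ∑ j ∈ F, A k j * σ2 k := by
      apply Finset.sum_lt_sum
      · intro j hj
        have h1 := hAnn j
        have h2 := hAle1 j hj
        have h3 := hFσ j hj
        have h4 := hσ j
        have e : A k j ^ 2 * σ2 j ≤ A k j * σ2 j :=
          mul_le_mul_of_nonneg_right
            (by nlinarith [mul_nonneg h1 (sub_nonneg.mpr h2)] : A k j ^ 2 ≤ A k j) h4.le
        have e' : A k j * σ2 j ≤ A k j * σ2 k := mul_le_mul_of_nonneg_left h3.le h1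
        linarith
      · refine ⟨j0, hj0F, ?_⟩
        have h2 := hAle1 j0 hj0F
        have h3 := hFσ j0 hj0F
        have h4 := hσ j0
        have e : A k j0 ^ 2 * σ2 j0 ≤ A k j0 * σ2 j0 :=
          mul_le_mul_of_nonneg_right
            (by nlinarith [mul_nonneg hj0pos.le (sub_nonneg.mpr h2)] : A k j0 ^ 2 ≤ A k j0)
            h4.le
        have e' : A k j0 * σ2 j0 < A k j0 * σ2 k := mul_lt_mul_of_pos_left h3 hj0pos
        linarith
    have e3 : ∑ j ∈ F, A k j * σ2 k = σ2 k := by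
      rw [← Finset.sum_mul, hsumF, one_mul]
    calc ∑ j, (A k j) ^ 2 * σ2 j = ∑ j ∈ F, (A k j) ^ 2 * σ2 j := e1
      _ < ∑ j ∈ F, A k j * σ2 k := e2
      _ = σ2 k := e3
  -- CONSTANCY on [0,1)
  have hconst : ∀ t : ℝ, 0 ≤ t → t < 1 →
      ∀ j, H (Function.update z k t) k j = H (Function.update z k 0) k j := by
    intro t ht0 ht1 j
    set wt := Function.update z k t with hwtdef
    set w0 := Function.update z k (0:ℝ) with hw0def
    have hwtm : ∀ i, wt i ∈ Set.Icc (0:ℝ) 1 := hwmem t ht0 ht1.le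
    have hw0m : ∀ i, w0 i ∈ Set.Icc (0:ℝ) 1 := hwmem 0 le_rfl zero_le_one
    set A := H wt with hAdef
    set B := H w0 with hBdef
    set Qt := Qm P wt with hQtdef
    set Q0 := Qm P w0 with hQ0def
    have hAlim : ∀ i j, Tendsto (fun u : ℕ => (Qt ^ u) i j) atTop (𝓝 (A i j)) := hH wt hwtm
    have hBlim : ∀ i j, Tendsto (fun u : ℕ => (Q0 ^ u) i j) atTop (𝓝 (B i j)) := hH w0 hw0m
    have hwtk : wt k = t := by rw [hwtdef]; exact hwk t
    have hw0k : w0 k = 0 := by rw [hw0def]; exact hwk 0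
    have hiff : ∀ i, (wt i = 1 ↔ w0 i = 1) := by
      intro i
      by_cases hik : i = k
      · subst hik
        rw [hwtk, hw0k]
        constructor
        · intro h; exfalso; linarith
        · intro h; exfalso; linarith
      · rw [hwtdef, hw0def, hwnk t i hik, hwnk 0 i hik]
    have hwts : wt s = 1 := by rw [hwtdef, hwnk t s hsk]; exact hs1
    have hw0s : w0 s = 1 := by rw [hw0def, hwnk 0 s hsk]; exact hs1
    have hmpt : ∀ i, ∃ l, wt l = 1 ∧ 0 < (Qt ^ m) i l :=
      fun i => Qm_path P hPnn hPdiag wt hwtm s hwts m i (hmp i s)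
    have hmp0 : ∀ i, ∃ l, w0 l = 1 ∧ 0 < (Q0 ^ m) i l :=
      fun i => Qm_path P hPnn hPdiag w0 hw0m s hw0s m i (hmp i s)
    have hnnQt : ∀ i l, 0 ≤ Qt i l := Qm_nonneg P hPnn wt hwtm
    have hnnQ0 : ∀ i l, 0 ≤ Q0 i l := Qm_nonneg P hPnn w0 hw0m
    obtain ⟨ct, hct0, hct1, hdect⟩ :=
      decayLem Qt (fun l => wt l = 1) hnnQt (Qm_row P hProw wt)
        (fun i hi l => Qm_stub P wt i hi l) hn0 m hmpt
    obtain ⟨c0, hc00, hc01, hdec0⟩ :=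
      decayLem Q0 (fun l => w0 l = 1) hnnQ0 (Qm_row P hProw w0)
        (fun i hi l => Qm_stub P w0 i hi l) hn0 m hmp0
    by_cases hjst : w0 j = 1
    · -- stubborn column: uniqueness of harmonic extension
      have hwtj : wt j = 1 := (hiff j).mpr hjst
      set d : Fin n → ℝ := fun i => A i j - B i j with hddef
      have hd0 : ∀ i, w0 i = 1 → d i = 0 := by
        intro i hi
        have hwti : wt i = 1 := (hiff i).mpr hi
        have e1 : A i j = if i = j then 1 else 0 := H_stubrow P wt A hAlim i hwti j
        have e2 : B i j = if i = j then 1 else 0 := H_stubrow P w0 B hBlim i hi j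
        simp only [hddef]
        rw [e1, e2, sub_self]
      have hfixA := H_fixed P wt A hAlim
      have hfixB := H_fixed P w0 B hBlim
      have hQ0k : ∀ l, Qm P w0 k l = P k l := by
        intro l
        rw [Qm_apply, hw0k]
        split <;> ring
      have hAk : A k j = ∑ l, P k l * A l j := by
        have e := hfixA k j
        have esum : ∑ l, Qm P wt k l * A l j
            = (1 - t) * (∑ l, P k l * A l j) + t * A k j := by
          have hterm : ∀ l : Fin n, Qm P wt k l * A l j
              = (1 - t) * (P k l * A l j) + (if k = l then t * A l j else 0) := by
            intro l
            rw [Qm_apply, hwtk]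
            split <;> ring
          rw [Finset.sum_congr rfl fun l _ => hterm l, Finset.sum_add_distrib,
            ← Finset.mul_sum, Finset.sum_ite_eq Finset.univ k (fun l => t * A l j)]
          simp
        rw [esum] at e
        have h1t : (1:ℝ) - t ≠ 0 := by intro h; linarith
        have e2 : (1 - t) * A k j = (1 - t) * ∑ l, P k l * A l j := by linarith
        exact mul_left_cancel₀ h1t e2
      have hBk : B k j = ∑ l, P k l * B l j := by
        have e := hfixB k j
        rw [Finset.sum_congr rfl fun l (_ : l ∈ Finset.univ) => by rw [hQ0k l]] at e
        exact e
      have hdh : ∀ i, d i = ∑ l, Q0 i l * d l := by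
        intro i
        by_cases hik : i = k
        · subst hik
          simp only [hddef, hQ0def]
          rw [hAk, hBk, ← Finset.sum_sub_distrib]
          exact Finset.sum_congr rfl fun l _ => by rw [hQ0k l]; ring
        · have hweq : w0 i = wt i := by
            rw [hwtdef, hw0def, hwnk t i hik, hwnk 0 i hik]
          have hrow : ∀ l, Qm P w0 i l = Qm P wt i l := by
            intro l
            rw [Qm_apply, Qm_apply, hweq]
          simp only [hddef, hQ0def]
          rw [hfixA i j, hfixB i j, ← Finset.sum_sub_distrib]
          exact Finset.sum_congr rfl fun l _ => by rw [hrow l]; ring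
      have hdz := harmonicZero Q0 (fun l => w0 l = 1) hnnQ0 hn0 m hm1 c0 hc00 hc01
        hdec0 d hd0 hdh k
      simp only [hddef] at hdz
      linarith
    · -- transient column: both limits vanish
      have hjt : ¬ wt j = 1 := fun h => hjst ((hiff j).mp h)
      have hA0 : A k j = 0 :=
        limitZero Qt (fun l => wt l = 1) hnnQt m hm1 ct hct0 hct1 hdect A hAlim k j hjt
      have hB0 : B k j = 0 :=
        limitZero Q0 (fun l => w0 l = 1) hnnQ0 m hm1 c0 hc00 hc01 hdec0 B hBlim k j hjst
      rw [hA0, hB0]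
  -- ASSEMBLY
  refine ⟨fun t ht => part1 t ht.1 ht.2, part2, ?_⟩
  ext t
  simp only [Set.mem_setOf_eq, Set.mem_Ico, Set.mem_Icc]
  constructor
  · rintro ⟨⟨ht0, ht1⟩, hmin⟩
    refine ⟨ht0, ?_⟩
    rcases lt_or_eq_of_le ht1 with h | h
    · exact h
    · exfalso
      subst h
      have h1 := hmin 0 ⟨le_rfl, zero_le_one⟩
      have h2 := part1 0 le_rfl one_pos
      rw [part2] at h1
      linarith
  · rintro ⟨ht0, ht1⟩
    refine ⟨⟨ht0, ht1.le⟩, ?_⟩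
    intro s' hs'
    rcases lt_or_eq_of_le hs'.2 with h | h
    · have e1 := hconst t ht0 ht1
      have e2 := hconst s' hs'.1 h
      have : ∑ j, (H (Function.update z k t) k j) ^ 2 * σ2 j
          = ∑ j, (H (Function.update z k s') k j) ^ 2 * σ2 j := by
        refine Finset.sum_congr rfl fun j _ => ?_
        rw [e1 j, e2 j]
      exact le_of_eq this
    · subst h
      rw [part2]
      exact (part1 t ht0 ht1).le
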